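/- Let α ⊨ n. Every equivalence class of SRCT(α) under the equivalence relation ∼_α contains exactly one source tableau and exactly one sink tableau. Consequently, the number of source tableaux of shape α equals the number of sink tableaux of shape α, and both equal the number of equivalence classes of SRCT(α) under ∼_α. -/

import Mathlib

/-- Cell `(r,c)` (0-indexed: row `r` from the top, column `c` from the left) of the
reverse composition diagram of the composition `α`. -/
def IsCell (α : List ℕ) (r c : ℕ) : Prop := r < α.length ∧ c < α.getD r 0

instance (α : List ℕ) (r c : ℕ) : Decidable (IsCell α r c) :=
  inferInstanceAs (Decidable (r < α.length ∧ c < α.getD r 0))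

/-- A standard reverse composition tableau (SRCT) of shape `α`: a bijective filling of the
reverse composition diagram of `α` by `{1,…,α.sum}` (with the junk value `0` off the diagram)
whose rows decrease from left to right, whose first column increases from top to bottom,
and which satisfies the triple rule. -/
structure SRCT (α : List ℕ) where
  entry : ℕ → ℕ → ℕ
  zero_off : ∀ r c, ¬ IsCell α r c → entry r c = 0
  one_le : ∀ r c, IsCell α r c → 1 ≤ entry r c
  le_sum : ∀ r c, IsCell α r c → entry r c ≤ α.sum
  inj : ∀ r c r' c', IsCell α r c → IsCell α r' c' → entry r c = entry r' c' → r = r' ∧ c = c'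
  surj : ∀ m, 1 ≤ m → m ≤ α.sum → ∃ r c, IsCell α r c ∧ entry r c = m
  row_dec : ∀ r c, IsCell α r (c + 1) → entry r (c + 1) < entry r c
  col1_inc : ∀ r r', r < r' → IsCell α r 0 → IsCell α r' 0 → entry r 0 < entry r' 0
  triple : ∀ r r' c, r < r' → IsCell α r c → IsCell α r' (c + 1) →
    entry r' (c + 1) < entry r c → IsCell α r (c + 1) ∧ entry r' (c + 1) < entry r (c + 1)

/-- `i` is a descent of `T`: `i+1` appears weakly right of `i`. -/
def Descent (α : List ℕ) (T : SRCT α) (i : ℕ) : Prop :=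
  ∃ r c r' c', IsCell α r c ∧ IsCell α r' c' ∧
    T.entry r c = i ∧ T.entry r' c' = i + 1 ∧ c ≤ c'

/-- `i` and `i+1` are attacking in `T`: same column, or adjacent columns with `i+1`
strictly southeast of `i`. -/
def Attacking (α : List ℕ) (T : SRCT α) (i : ℕ) : Prop :=
  ∃ r c r' c', IsCell α r c ∧ IsCell α r' c' ∧
    T.entry r c = i ∧ T.entry r' c' = i + 1 ∧ (c' = c ∨ (c' = c + 1 ∧ r < r'))

/-- The entry function of the filling `s_i(T)` obtained from `T` by interchanging the
positions of the entries `i` and `i+1`. -/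
def swapEntry (α : List ℕ) (T : SRCT α) (i : ℕ) : ℕ → ℕ → ℕ := fun r c =>
  if T.entry r c = i then i + 1 else if T.entry r c = i + 1 then i else T.entry r c

def maxPart (α : List ℕ) : ℕ := α.foldr max 0

/-- The entries of column `c` of `T`, read from top to bottom. -/
def colList (α : List ℕ) (T : SRCT α) (c : ℕ) : List ℕ :=
  (List.range α.length).filterMap fun r => if IsCell α r c then some (T.entry r c) else none

/-- The column word of `T`: entries of each column read top to bottom, columns left to right,
viewed as a permutation of `{1,…,n}` in one-line notation. -/
def colWord (α : List ℕ) (T : SRCT α) : List ℕ :=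
  (List.range (maxPart α)).flatMap fun c => colList α T c

/-- The inversion set of a one-line word: pairs of positions `p < q` with `w_p > w_q`. -/
def invFinset (w : List ℕ) : Finset (ℕ × ℕ) :=
  (Finset.range w.length ×ˢ Finset.range w.length).filter fun pq =>
    pq.1 < pq.2 ∧ w.getD pq.2 0 < w.getD pq.1 0

/-- The number of inversions, i.e. the Coxeter length of the one-line word. -/
def invCount (w : List ℕ) : ℕ := (invFinset w).card

/-- The standardization of a word with distinct letters, with ranks `1,…,len`. -/
def stdWord (w : List ℕ) : List ℕ :=
  w.map fun x => (w.filter fun y => decide (y ≤ x)).length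

/-- The standardized column word of `T`: concatenation over columns (left to right) of the
standardizations of the column reading words (top to bottom). -/
def stWord (α : List ℕ) (T : SRCT α) : List ℕ :=
  (List.range (maxPart α)).flatMap fun c => stdWord (colList α T c)

/-- The equivalence class of `T0` under `∼_α` (equal standardized column words). -/
def stClass (α : List ℕ) (T0 : SRCT α) : Set (SRCT α) := {T | stWord α T = stWord α T0}

/-- `T` is a source tableau: for every non-descent `i ≠ n`, the entry `i+1` lies in the cell
immediately to the left of the cell containing `i`. -/
def IsSource (α : List ℕ) (T : SRCT α) : Prop :=
  ∀ i, 1 ≤ i → i < α.sum → ¬ Descent α T i →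
    ∃ r c, IsCell α r (c + 1) ∧ T.entry r c = i + 1 ∧ T.entry r (c + 1) = i

/-- `T` is a sink tableau: every descent of `T` is an attacking descent. -/
def IsSink (α : List ℕ) (T : SRCT α) : Prop := ∀ i, Descent α T i → Attacking α T i


/-! ### Infrastructure -/

section Infra
variable {α : List ℕ}

theorem SRCT.ext' {T T' : SRCT α} (h : T.entry = T'.entry) : T = T' := by
  cases T; cases T'; simpa using h

theorem cell_mono {r c c' : ℕ} (h : IsCell α r c) (hc : c' ≤ c) : IsCell α r c' :=
  ⟨h.1, lt_of_le_of_lt hc h.2⟩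

/-- strict decrease along a row over any distance -/
theorem row_dec_lt (T : SRCT α) {r c c' : ℕ} (h : IsCell α r c') (hcc : c < c') :
    T.entry r c' < T.entry r c := by
  induction c' with
  | zero => omega
  | succ k ih =>
    rcases Nat.lt_or_ge c k with hk | hk
    · exact lt_trans (T.row_dec r k h) (ih (cell_mono h (Nat.le_succ k)) hk)
    · have : c = k := by omega
      subst this; exact T.row_dec r c h

theorem getD_le_maxPart : ∀ {α : List ℕ} {r : ℕ}, r < α.length → α.getD r 0 ≤ maxPart α := by
  intro α
  induction α with
  | nil => intro r h; simp at h
  | cons a l ih =>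
    intro r h
    cases r with
    | zero => simp [maxPart]
    | succ k =>
      have hk : k < l.length := by simpa using h
      have h2 := ih hk
      simp only [maxPart] at *
      refine le_trans ?_ (le_max_right a _)
      simpa using h2

theorem cell_col_lt_maxPart {r c : ℕ} (h : IsCell α r c) : c < maxPart α :=
  lt_of_lt_of_le h.2 (getD_le_maxPart h.1)

end Infra

section Pos
variable {α : List ℕ} (T : SRCT α)

/-- row of the cell containing value `v` (for `1 ≤ v ≤ α.sum`). -/
noncomputable def rowOf (v : ℕ) : ℕ := by
  classical
  exact if h : 1 ≤ v ∧ v ≤ α.sum then (T.surj v h.1 h.2).choose else 0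

noncomputable def colOf (v : ℕ) : ℕ := by
  classical
  exact if h : 1 ≤ v ∧ v ≤ α.sum then (T.surj v h.1 h.2).choose_spec.choose else 0

theorem posOf_spec {v : ℕ} (h1 : 1 ≤ v) (h2 : v ≤ α.sum) :
    IsCell α (rowOf T v) (colOf T v) ∧ T.entry (rowOf T v) (colOf T v) = v := by
  classical
  rw [rowOf, colOf, dif_pos ⟨h1, h2⟩, dif_pos ⟨h1, h2⟩]
  exact (T.surj v h1 h2).choose_spec.choose_spec

theorem posOf_cell {v : ℕ} (h1 : 1 ≤ v) (h2 : v ≤ α.sum) :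
    IsCell α (rowOf T v) (colOf T v) := (posOf_spec T h1 h2).1

theorem entry_posOf {v : ℕ} (h1 : 1 ≤ v) (h2 : v ≤ α.sum) :
    T.entry (rowOf T v) (colOf T v) = v := (posOf_spec T h1 h2).2

theorem posOf_unique {v r c : ℕ} (hc : IsCell α r c) (he : T.entry r c = v) :
    r = rowOf T v ∧ c = colOf T v := by
  have h1 : 1 ≤ v := he ▸ T.one_le r c hc
  have h2 : v ≤ α.sum := he ▸ T.le_sum r c hc
  exact T.inj r c _ _ hc (posOf_cell T h1 h2) (he.trans (entry_posOf T h1 h2).symm)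

end Pos

/-! ### The value swap -/

/-- swap the values `i` and `i+1` -/
def gswap (i v : ℕ) : ℕ := if v = i then i + 1 else if v = i + 1 then i else v

theorem swapEntry_eq (α : List ℕ) (T : SRCT α) (i r c : ℕ) :
    swapEntry α T i r c = gswap i (T.entry r c) := rfl

theorem gswap_ne {i v : ℕ} (h1 : v ≠ i) (h2 : v ≠ i + 1) : gswap i v = v := by
  simp [gswap, h1, h2]

theorem gswap_lt_iff {i v w : ℕ} (hvw : ¬(v = i ∧ w = i + 1)) (hwv : ¬(v = i + 1 ∧ w = i)) :
    gswap i v < gswap i w ↔ v < w := by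
  unfold gswap
  by_cases h1 : v = i <;> by_cases h2 : w = i <;>
    by_cases h3 : v = i+1 <;> by_cases h4 : w = i+1 <;> simp_all <;> omega

theorem gswap_le_iff {i v w : ℕ} (hvw : ¬(v = i ∧ w = i + 1)) (hwv : ¬(v = i + 1 ∧ w = i)) :
    gswap i v ≤ gswap i w ↔ v ≤ w := by
  unfold gswap
  by_cases h1 : v = i <;> by_cases h2 : w = i <;>
    by_cases h3 : v = i+1 <;> by_cases h4 : w = i+1 <;> simp_all <;> omega

theorem gswap_inj {i v w : ℕ} (h : gswap i v = gswap i w) : v = w := by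
  unfold gswap at h
  by_cases h1 : v = i <;> by_cases h2 : w = i <;>
    by_cases h3 : v = i+1 <;> by_cases h4 : w = i+1 <;> simp_all <;> omega

/-! ### Column lists and standardization -/

section Col
variable {α : List ℕ}

/-- rows having a cell in column `c` -/
def rowsIn (α : List ℕ) (c : ℕ) : List ℕ :=
  (List.range α.length).filter (fun r => decide (IsCell α r c))

theorem colList_eq (T : SRCT α) (c : ℕ) :
    colList α T c = (rowsIn α c).map (fun r => T.entry r c) := by
  unfold colList rowsIn
  induction (List.range α.length) with
  | nil => simp
  | cons a l ih =>
    by_cases h : IsCell α a c <;> simp [h, ih]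

theorem mem_colList {T : SRCT α} {c v : ℕ} :
    v ∈ colList α T c ↔ ∃ r, IsCell α r c ∧ T.entry r c = v := by
  rw [colList_eq]
  simp only [List.mem_map, rowsIn, List.mem_filter, List.mem_range, decide_eq_true_eq]
  constructor
  · rintro ⟨r, ⟨-, hc⟩, he⟩; exact ⟨r, hc, he⟩
  · rintro ⟨r, hc, he⟩; exact ⟨r, ⟨hc.1, hc⟩, he⟩

/-- the rank of `x` in `l` -/
def rk (l : List ℕ) (x : ℕ) : ℕ := (l.filter fun y => decide (y ≤ x)).length

theorem stdWord_eq_map_rk (l : List ℕ) : stdWord l = l.map (rk l) := rfl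

theorem rk_lt_rk {l : List ℕ} {x y : ℕ} (hy : y ∈ l) (hxy : x < y) :
    rk l x < rk l y := by
  obtain ⟨l1, l2, rfl⟩ := List.append_of_mem hy
  unfold rk
  simp only [List.filter_append, List.filter_cons, List.length_append]
  have hx : ¬ (y ≤ x) := by omega
  simp only [decide_eq_true_eq, hx, if_false, if_pos (le_refl y), List.length_cons]
  have h1 : (l1.filter fun z => decide (z ≤ x)).length ≤
      (l1.filter fun z => decide (z ≤ y)).length := by
    apply List.Sublist.length_le
    apply List.monotone_filter_right
    intro z hz
    simp only [decide_eq_true_eq] at *; omega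
  have h2 : (l2.filter fun z => decide (z ≤ x)).length ≤
      (l2.filter fun z => decide (z ≤ y)).length := by
    apply List.Sublist.length_le
    apply List.monotone_filter_right
    intro z hz
    simp only [decide_eq_true_eq] at *; omega
  omega

theorem rk_lt_iff {l : List ℕ} {x y : ℕ} (hx : x ∈ l) (hy : y ∈ l) (hxy : x ≠ y) :
    x < y ↔ rk l x < rk l y := by
  constructor
  · exact fun h => rk_lt_rk hy h
  · intro h
    rcases lt_trichotomy x y with h1 | h1 | h1
    · exact h1
    · omega
    · exact absurd (rk_lt_rk hx h1) (by omega)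

theorem countP_congr' {l : List ℕ} {p q : ℕ → Bool} (h : ∀ a ∈ l, p a = q a) :
    l.countP p = l.countP q := by
  induction l with
  | nil => rfl
  | cons a t ih =>
    rw [List.countP_cons, List.countP_cons, h a (by simp),
      ih (fun b hb => h b (by simp [hb]))]

theorem stdWord_map_gswap {l : List ℕ} {i : ℕ} (h1 : i ∈ l → i + 1 ∉ l)
    (h2 : i + 1 ∈ l → i ∉ l) :
    stdWord (l.map (gswap i)) = stdWord l := by
  rw [stdWord_eq_map_rk, stdWord_eq_map_rk, List.map_map]
  apply List.map_congr_left
  intro x hx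
  show rk (l.map (gswap i)) (gswap i x) = rk l x
  unfold rk
  rw [← List.countP_eq_length_filter, ← List.countP_eq_length_filter, List.countP_map]
  apply countP_congr'
  intro y hy
  show decide (gswap i y ≤ gswap i x) = decide (y ≤ x)
  have hne1 : ¬(y = i ∧ x = i + 1) := by
    rintro ⟨rfl, rfl⟩; exact (h2 hx) hy
  have hne2 : ¬(y = i + 1 ∧ x = i) := by
    rintro ⟨rfl, rfl⟩; exact (h1 hx) hy
  by_cases h : y ≤ x
  · simp [h, (gswap_le_iff hne1 hne2).mpr h]
  · have : ¬ gswap i y ≤ gswap i x := fun hh => h ((gswap_le_iff hne1 hne2).mp hh)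
    simp [h, this]

/-- split equality of flatMaps with componentwise equal lengths -/
theorem flatMap_inj {β : Type*} {L : List β} {f g : β → List ℕ}
    (hlen : ∀ b ∈ L, (f b).length = (g b).length)
    (h : L.flatMap f = L.flatMap g) : ∀ b ∈ L, f b = g b := by
  induction L with
  | nil => simp
  | cons a t ih =>
    rw [List.flatMap_cons, List.flatMap_cons] at h
    have := List.append_inj h (hlen a (by simp))
    intro b hb
    rcases List.mem_cons.mp hb with rfl | hb'
    · exact this.1
    · exact ih (fun x hx => hlen x (by simp [hx])) this.2 b hb'

theorem stWord_component {T T' : SRCT α} (h : stWord α T = stWord α T') :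
    ∀ c, c < maxPart α → stdWord (colList α T c) = stdWord (colList α T' c) := by
  intro c hc
  refine flatMap_inj (f := fun c => stdWord (colList α T c))
    (g := fun c => stdWord (colList α T' c)) ?_ h c (List.mem_range.mpr hc)
  intro b _
  show (stdWord (colList α T b)).length = (stdWord (colList α T' b)).length
  rw [stdWord_eq_map_rk, stdWord_eq_map_rk, List.length_map, List.length_map,
    colList_eq, colList_eq, List.length_map, List.length_map]

/-- the key consequence of equal standardized column words:
identical relative order within each column -/
theorem col_order {T T' : SRCT α} (h : stWord α T = stWord α T')
    {r s c : ℕ} (hr : IsCell α r c) (hs : IsCell α s c) :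
    (T.entry r c < T.entry s c ↔ T'.entry r c < T'.entry s c) := by
  by_cases hrs : r = s
  · subst hrs; simp
  have hcm : c < maxPart α := cell_col_lt_maxPart hr
  have hstd := stWord_component h c hcm
  have hrmem : r ∈ rowsIn α c := by
    unfold rowsIn; simp only [List.mem_filter, List.mem_range, decide_eq_true_eq]
    exact ⟨hr.1, hr⟩
  have hsmem : s ∈ rowsIn α c := by
    unfold rowsIn; simp only [List.mem_filter, List.mem_range, decide_eq_true_eq]
    exact ⟨hs.1, hs⟩
  have hform : ∀ (S : SRCT α), stdWord (colList α S c) =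
      (rowsIn α c).map (fun u => rk (colList α S c) (S.entry u c)) := by
    intro S
    rw [stdWord_eq_map_rk, colList_eq, List.map_map]
    rfl
  rw [hform, hform] at hstd
  have hpt := List.map_eq_map_iff.mp hstd
  have er := hpt r hrmem
  have es := hpt s hsmem
  have hTne : T.entry r c ≠ T.entry s c := fun hh => hrs (T.inj r c s c hr hs hh).1
  have hTne' : T'.entry r c ≠ T'.entry s c := fun hh => hrs (T'.inj r c s c hr hs hh).1
  have m1 : T.entry r c ∈ colList α T c := mem_colList.mpr ⟨r, hr, rfl⟩
  have m2 : T.entry s c ∈ colList α T c := mem_colList.mpr ⟨s, hs, rfl⟩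
  have m3 : T'.entry r c ∈ colList α T' c := mem_colList.mpr ⟨r, hr, rfl⟩
  have m4 : T'.entry s c ∈ colList α T' c := mem_colList.mpr ⟨s, hs, rfl⟩
  rw [rk_lt_iff m1 m2 hTne, er, es, ← rk_lt_iff m3 m4 hTne']
end Col

/-! ### Validity of swaps -/

theorem gswap_gswap (i v : ℕ) : gswap i (gswap i v) = v := by
  unfold gswap
  by_cases h1 : v = i <;> by_cases h2 : v = i + 1 <;> simp_all

section Swap
variable {α : List ℕ} {T : SRCT α} {i r c r' c' : ℕ}

/-- the two legal swap configurations -/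
def SwapCase (r c r' c' : ℕ) : Prop :=
  (c < c' ∧ ¬(c' = c + 1 ∧ r < r')) ∨ (c' < c ∧ ¬(r' = r ∧ c' + 1 = c))

variable (hx : IsCell α r c) (hy : IsCell α r' c')
  (hex : T.entry r c = i) (hey : T.entry r' c' = i + 1)

include hx hy hex hey

theorem swap_rows_ne (hcase : SwapCase r c r' c') : r ≠ r' := by
  rintro rfl
  rcases hcase with ⟨hlt, -⟩ | ⟨hlt, hne⟩
  · have := row_dec_lt T hy hlt
    omega
  · rcases Nat.lt_or_ge (c' + 1) c with h1 | h1
    · have hcell : IsCell α r (c' + 1) := cell_mono hx (by omega)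
      have e1 := row_dec_lt T hx (show c' + 1 < c by omega)
      have e2 := T.row_dec r c' hcell
      rw [hey] at e2
      omega
    · have : c' + 1 = c := by omega
      exact absurd ⟨rfl, this⟩ hne

theorem entry_eq_i_iff {p q : ℕ} (hpq : IsCell α p q) :
    T.entry p q = i ↔ (p = r ∧ q = c) := by
  constructor
  · intro h
    exact T.inj p q r c hpq hx (h.trans hex.symm)
  · rintro ⟨rfl, rfl⟩; exact hex

theorem entry_eq_i1_iff {p q : ℕ} (hpq : IsCell α p q) :
    T.entry p q = i + 1 ↔ (p = r' ∧ q = c') := by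
  constructor
  · intro h
    exact T.inj p q r' c' hpq hy (h.trans hey.symm)
  · rintro ⟨rfl, rfl⟩; exact hey

theorem swap_valid (hcase : SwapCase r c r' c') :
    ∃ T2 : SRCT α, T2.entry = swapEntry α T i := by
  have hi1 : 1 ≤ i := hex ▸ T.one_le r c hx
  have hin : i + 1 ≤ α.sum := hey ▸ T.le_sum r' c' hy
  have hrr : r ≠ r' := swap_rows_ne hx hy hex hey hcase
  have hcc : c ≠ c' := by rcases hcase with ⟨h, -⟩ | ⟨h, -⟩ <;> omega
  -- entries not i / i+1 off the two special cells give unchanged values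
  have hgne : ∀ p q, IsCell α p q → ¬(p = r ∧ q = c) → ¬(p = r' ∧ q = c') →
      swapEntry α T i p q = T.entry p q := by
    intro p q hpq h1 h2
    rw [swapEntry_eq]
    exact gswap_ne (fun h => h1 ((entry_eq_i_iff hx hy hex hey hpq).mp h))
      (fun h => h2 ((entry_eq_i1_iff hx hy hex hey hpq).mp h))
  have hEx : swapEntry α T i r c = i + 1 := by rw [swapEntry_eq, hex, gswap]; simp
  have hEy : swapEntry α T i r' c' = i := by
    rw [swapEntry_eq, hey]; unfold gswap; simp
  -- no order-flip pairs within a row or column 0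
  have hpair : ∀ p q p'' q'', IsCell α p q → IsCell α p'' q'' → (p = p'' ∨ (q = 0 ∧ q'' = 0)) →
      (swapEntry α T i p q < swapEntry α T i p'' q'' ↔ T.entry p q < T.entry p'' q'') := by
    intro p q p'' q'' h1 h2 hsame
    rw [swapEntry_eq, swapEntry_eq]
    apply gswap_lt_iff
    · rintro ⟨e1, e2⟩
      obtain ⟨rfl, rfl⟩ := (entry_eq_i_iff hx hy hex hey h1).mp e1
      obtain ⟨rfl, rfl⟩ := (entry_eq_i1_iff hx hy hex hey h2).mp e2
      rcases hsame with h | ⟨h1, h2⟩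
      · exact hrr h
      · exact hcc (h1.trans h2.symm)
    · rintro ⟨e1, e2⟩
      obtain ⟨rfl, rfl⟩ := (entry_eq_i1_iff hx hy hex hey h1).mp e1
      obtain ⟨rfl, rfl⟩ := (entry_eq_i_iff hx hy hex hey h2).mp e2
      rcases hsame with h | ⟨h1, h2⟩
      · exact hrr h.symm
      · exact hcc (h2.trans h1.symm)
  refine ⟨⟨swapEntry α T i, ?_, ?_, ?_, ?_, ?_, ?_, ?_, ?_⟩, rfl⟩
  · -- zero_off
    intro p q h
    rw [swapEntry_eq, T.zero_off p q h]
    exact gswap_ne (by omega) (by omega)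
  · -- one_le
    intro p q h
    rw [swapEntry_eq]
    have := T.one_le p q h
    unfold gswap
    split <;> [omega; skip]
    split <;> omega
  · -- le_sum
    intro p q h
    rw [swapEntry_eq]
    have h2 := T.le_sum p q h
    unfold gswap
    split <;> [omega; skip]
    split <;> omega
  · -- inj
    intro p q p'' q'' h1 h2 he
    rw [swapEntry_eq, swapEntry_eq] at he
    exact T.inj p q p'' q'' h1 h2 (gswap_inj he)
  · -- surj
    intro m hm1 hm2
    have hg1 : 1 ≤ gswap i m := by unfold gswap; split <;> [omega; skip]; split <;> omega
    have hg2 : gswap i m ≤ α.sum := by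
      unfold gswap; split <;> [omega; skip]; split <;> omega
    obtain ⟨p, q, hpq, he⟩ := T.surj (gswap i m) hg1 hg2
    exact ⟨p, q, hpq, by rw [swapEntry_eq, he, gswap_gswap]⟩
  · -- row_dec
    intro p q h
    rw [hpair p (q+1) p q (by assumption) (cell_mono (by assumption) (Nat.le_succ q))
      (Or.inl rfl)]
    exact T.row_dec p q h
  · -- col1_inc
    intro p p'' hpp h1 h2
    rw [hpair p 0 p'' 0 h1 h2 (Or.inr ⟨rfl, rfl⟩)]
    exact T.col1_inc p p'' hpp h1 h2
  · -- triple
    intro p p' q hpp hA hB hcond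
    by_cases hBx : p' = r ∧ q + 1 = c
    · -- B = x
      obtain ⟨rfl, rfl⟩ := hBx
      rw [hEx] at hcond
      by_cases hAy : p = r' ∧ q = c'
      · obtain ⟨rfl, rfl⟩ := hAy
        rw [hEy] at hcond; omega
      · have hAx : ¬(p = p' ∧ q = q + 1) := by rintro ⟨-, h⟩; omega
        rw [hgne p q hA hAx hAy] at hcond
        obtain ⟨hC, hCgt⟩ := T.triple p p' q hpp hA hB (by rw [hex]; omega)
        rw [hex] at hCgt
        have hCx : ¬(p = p' ∧ q + 1 = q + 1) := by rintro ⟨rfl, -⟩; omega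
        have hCy : ¬(p = r' ∧ q + 1 = c') := by
          rintro ⟨rfl, rfl⟩; exact hcc rfl
        refine ⟨hC, ?_⟩
        rw [hEx, hgne p (q + 1) hC hCx hCy]
        have : T.entry p (q + 1) ≠ i + 1 :=
          fun he => hCy ((entry_eq_i1_iff hx hy hex hey hC).mp he)
        omega
    · by_cases hBy : p' = r' ∧ q + 1 = c'
      · -- B = y
        obtain ⟨rfl, rfl⟩ := hBy
        rw [hEy] at hcond
        have hAx : ¬(p = r ∧ q = c) := by
          rintro ⟨rfl, rfl⟩
          rcases hcase with ⟨-, hne⟩ | ⟨hlt, -⟩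
          · exact hne ⟨rfl, hpp⟩
          · omega
        have hAy : ¬(p = p' ∧ q = q + 1) := by rintro ⟨-, h⟩; omega
        rw [hgne p q hA hAx hAy] at hcond
        have hAnoti1 : T.entry p q ≠ i + 1 :=
          fun he => hAy ((entry_eq_i1_iff hx hy hex hey hA).mp he)
        obtain ⟨hC, hCgt⟩ := T.triple p p' q hpp hA hB (by rw [hey]; omega)
        rw [hey] at hCgt
        have hCx : ¬(p = r ∧ q + 1 = c) := by rintro ⟨rfl, rfl⟩; exact hcc rfl
        have hCy : ¬(p = p' ∧ q + 1 = q + 1) := by rintro ⟨rfl, -⟩; omega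
        refine ⟨hC, ?_⟩
        rw [hEy, hgne p (q + 1) hC hCx hCy]
        omega
      · -- B ∉ {x, y}
        have hBne := hgne p' (q + 1) hB hBx hBy
        rw [hBne] at hcond
        have hBnoti : T.entry p' (q + 1) ≠ i :=
          fun he => hBx ((entry_eq_i_iff hx hy hex hey hB).mp he)
        have hBnoti1 : T.entry p' (q + 1) ≠ i + 1 :=
          fun he => hBy ((entry_eq_i1_iff hx hy hex hey hB).mp he)
        by_cases hAx : p = r ∧ q = c
        · -- A = x
          obtain ⟨rfl, rfl⟩ := hAx
          rw [hEx] at hcond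
          obtain ⟨hC, hCgt⟩ := T.triple p p' q hpp hA hB (by rw [hex]; omega)
          have hCx : ¬(p = p ∧ q + 1 = q) := by rintro ⟨-, h⟩; omega
          have hCy : ¬(p = r' ∧ q + 1 = c') := by rintro ⟨rfl, rfl⟩; exact hrr rfl
          refine ⟨hC, ?_⟩
          rw [hBne, hgne p (q + 1) hC hCx hCy]
          exact hCgt
        · by_cases hAy : p = r' ∧ q = c'
          · -- A = y
            obtain ⟨rfl, rfl⟩ := hAy
            rw [hEy] at hcond
            obtain ⟨hC, hCgt⟩ := T.triple p p' q hpp hA hB (by rw [hey]; omega)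
            have hCx : ¬(p = r ∧ q + 1 = c) := by rintro ⟨rfl, rfl⟩; exact hrr rfl
            have hCy : ¬(p = p ∧ q + 1 = q) := by rintro ⟨-, h⟩; omega
            refine ⟨hC, ?_⟩
            rw [hBne, hgne p (q + 1) hC hCx hCy]
            exact hCgt
          · -- generic
            rw [hgne p q hA hAx hAy] at hcond
            obtain ⟨hC, hCgt⟩ := T.triple p p' q hpp hA hB hcond
            refine ⟨hC, ?_⟩
            rw [hBne, swapEntry_eq]
            unfold gswap
            split_ifs with h1 h2 <;> omega

end Swap

/-! ### stWord preservation, measure -/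

section SwapMore
variable {α : List ℕ} {T T2 : SRCT α} {i r c r' c' : ℕ}

theorem stWord_swap (hx : IsCell α r c) (hy : IsCell α r' c')
    (hex : T.entry r c = i) (hey : T.entry r' c' = i + 1) (hcc : c ≠ c')
    (hT2 : T2.entry = swapEntry α T i) : stWord α T2 = stWord α T := by
  unfold stWord
  apply List.flatMap_congr
  intro cc _
  have hmap : colList α T2 cc = (colList α T cc).map (gswap i) := by
    rw [colList_eq, colList_eq, List.map_map]
    apply List.map_congr_left
    intro u _
    show T2.entry u cc = gswap i (T.entry u cc)
    rw [hT2]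
    rfl
  rw [hmap]
  apply stdWord_map_gswap
  · intro him hmem
    obtain ⟨p, hp, hep⟩ := mem_colList.mp him
    obtain ⟨p2, hp2, hep2⟩ := mem_colList.mp hmem
    obtain ⟨-, rfl⟩ := (entry_eq_i_iff hx hy hex hey hp).mp hep
    obtain ⟨-, h2⟩ := (entry_eq_i1_iff hx hy hex hey hp2).mp hep2
    omega
  · intro him hmem
    obtain ⟨p, hp, hep⟩ := mem_colList.mp him
    obtain ⟨p2, hp2, hep2⟩ := mem_colList.mp hmem
    obtain ⟨-, rfl⟩ := (entry_eq_i1_iff hx hy hex hey hp).mp hep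
    obtain ⟨-, h2⟩ := (entry_eq_i_iff hx hy hex hey hp2).mp hep2
    omega

end SwapMore

/-- the weighted measure `Σ c·entry(r,c)` -/
def Wmeas (α : List ℕ) (T : SRCT α) : ℕ :=
  ∑ p ∈ Finset.range α.length ×ˢ Finset.range (maxPart α), p.2 * T.entry p.1 p.2

section Meas
variable {α : List ℕ} {T T2 : SRCT α} {i r c r' c' : ℕ}

theorem Wmeas_swap (hx : IsCell α r c) (hy : IsCell α r' c') (hex : T.entry r c = i)
    (hey : T.entry r' c' = i + 1) (hcc : c ≠ c') (hT2 : T2.entry = swapEntry α T i) :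
    Wmeas α T2 + c * i + c' * (i + 1) = Wmeas α T + c * (i + 1) + c' * i := by
  classical
  have hi1 : 1 ≤ i := hex ▸ T.one_le r c hx
  set s := Finset.range α.length ×ˢ Finset.range (maxPart α) with hs
  have hpx : ((r, c) : ℕ × ℕ) ∈ s := by
    simp only [hs, Finset.mem_product, Finset.mem_range]
    exact ⟨hx.1, cell_col_lt_maxPart hx⟩
  have hne : ((r', c') : ℕ × ℕ) ≠ (r, c) := by
    intro h
    exact hcc (congrArg Prod.snd h).symm
  have hpy' : ((r', c') : ℕ × ℕ) ∈ s.erase (r, c) := by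
    refine Finset.mem_erase.mpr ⟨hne, ?_⟩
    simp only [hs, Finset.mem_product, Finset.mem_range]
    exact ⟨hy.1, cell_col_lt_maxPart hy⟩
  have hEx2 : T2.entry r c = i + 1 := by
    rw [hT2, swapEntry_eq, hex]; unfold gswap; simp
  have hEy2 : T2.entry r' c' = i := by
    rw [hT2, swapEntry_eq, hey]; unfold gswap; simp
  have key : ∀ p ∈ (s.erase (r, c)).erase (r', c'),
      T2.entry p.1 p.2 = T.entry p.1 p.2 := by
    intro p hp
    rw [Finset.mem_erase, Finset.mem_erase] at hp
    obtain ⟨hp1, hp2, -⟩ := hp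
    by_cases hcell : IsCell α p.1 p.2
    · rw [hT2, swapEntry_eq]
      refine gswap_ne ?_ ?_
      · intro h
        obtain ⟨h1, h2⟩ := (entry_eq_i_iff hx hy hex hey hcell).mp h
        exact hp2 (Prod.ext_iff.mpr ⟨h1, h2⟩)
      · intro h
        obtain ⟨h1, h2⟩ := (entry_eq_i1_iff hx hy hex hey hcell).mp h
        exact hp1 (Prod.ext_iff.mpr ⟨h1, h2⟩)
    · rw [T2.zero_off _ _ hcell, T.zero_off _ _ hcell]
  have expand : ∀ (S : SRCT α), Wmeas α S =
      c * S.entry r c + (c' * S.entry r' c' +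
        ∑ p ∈ (s.erase (r, c)).erase (r', c'), p.2 * S.entry p.1 p.2) := by
    intro S
    rw [Wmeas, ← Finset.add_sum_erase _ _ hpx, ← Finset.add_sum_erase _ _ hpy']
  have e3 : ∑ p ∈ (s.erase (r, c)).erase (r', c'), p.2 * T2.entry p.1 p.2 =
      ∑ p ∈ (s.erase (r, c)).erase (r', c'), p.2 * T.entry p.1 p.2 :=
    Finset.sum_congr rfl (fun p hp => by rw [key p hp])
  rw [expand T2, expand T, e3, hEx2, hEy2, hex, hey]
  ring

theorem Wmeas_lt (T : SRCT α) :
    Wmeas α T < α.length * maxPart α * (maxPart α * α.sum) + 1 := by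
  have h : Wmeas α T ≤ α.length * maxPart α * (maxPart α * α.sum) := by
    rw [Wmeas]
    calc ∑ p ∈ Finset.range α.length ×ˢ Finset.range (maxPart α), p.2 * T.entry p.1 p.2
        ≤ ∑ _p ∈ Finset.range α.length ×ˢ Finset.range (maxPart α), maxPart α * α.sum := by
          apply Finset.sum_le_sum
          intro p hp
          rw [Finset.mem_product, Finset.mem_range, Finset.mem_range] at hp
          apply Nat.mul_le_mul (le_of_lt hp.2)
          by_cases hcell : IsCell α p.1 p.2
          · exact T.le_sum p.1 p.2 hcell
          · rw [T.zero_off p.1 p.2 hcell]; omega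
      _ = α.length * maxPart α * (maxPart α * α.sum) := by
          rw [Finset.sum_const, Finset.card_product, Finset.card_range, Finset.card_range,
            smul_eq_mul]
  omega

end Meas

/-! ### Existence -/

section Exist
variable {α : List ℕ}

theorem exists_sink_aux : ∀ (W : ℕ) (T : SRCT α), Wmeas α T < W →
    ∃ T', stWord α T' = stWord α T ∧ IsSink α T' := by
  intro W
  induction W with
  | zero => intro T h; omega
  | succ W ih =>
    intro T hT
    by_cases hs : IsSink α T
    · exact ⟨T, rfl, hs⟩
    · rw [IsSink, not_forall] at hs
      obtain ⟨i, hi⟩ := hs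
      rw [Classical.not_imp] at hi
      obtain ⟨hd, hna⟩ := hi
      obtain ⟨r, c, r', c', hx, hy, hex, hey, hcle⟩ := hd
      have hcc : c ≠ c' := fun h => hna ⟨r, c, r', c', hx, hy, hex, hey, Or.inl h.symm⟩
      have hcase : SwapCase r c r' c' :=
        Or.inl ⟨lt_of_le_of_ne hcle hcc,
          fun ⟨h1, h2⟩ => hna ⟨r, c, r', c', hx, hy, hex, hey, Or.inr ⟨h1, h2⟩⟩⟩
      obtain ⟨T2, hT2⟩ := swap_valid hx hy hex hey hcase
      have hst := stWord_swap hx hy hex hey hcc hT2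
      have hw := Wmeas_swap hx hy hex hey hcc hT2
      have hcl : c < c' := lt_of_le_of_ne hcle hcc
      have hlt : Wmeas α T2 < Wmeas α T := by
        have e1 : c * (i + 1) = c * i + c := by ring
        have e2 : c' * (i + 1) = c' * i + c' := by ring
        omega
      obtain ⟨T', h1, h2⟩ := ih T2 (by omega)
      exact ⟨T', h1.trans hst, h2⟩

theorem exists_sink (T : SRCT α) : ∃ T', stWord α T' = stWord α T ∧ IsSink α T' :=
  exists_sink_aux (Wmeas α T + 1) T (Nat.lt_succ_self _)

theorem exists_source_aux : ∀ (g : ℕ) (T : SRCT α),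
    α.length * maxPart α * (maxPart α * α.sum) + 1 - Wmeas α T < g →
    ∃ T', stWord α T' = stWord α T ∧ IsSource α T' := by
  intro g
  induction g with
  | zero => intro T h; omega
  | succ g ih =>
    intro T hT
    by_cases hs : IsSource α T
    · exact ⟨T, rfl, hs⟩
    · rw [IsSource] at hs
      push_neg at hs
      obtain ⟨i, hi1, hi2, hnd, hne⟩ := hs
      obtain ⟨r, c, hx, hex⟩ := T.surj i hi1 (le_of_lt hi2)
      obtain ⟨r', c', hy, hey⟩ := T.surj (i + 1) (by omega) (by omega)
      have hclt : c' < c := by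
        by_contra h
        exact hnd ⟨r, c, r', c', hx, hy, hex, hey, by omega⟩
      have hadj : ¬(r' = r ∧ c' + 1 = c) := by
        rintro ⟨rfl, hc⟩
        exact hne r' c' (hc ▸ hx) hey (hc ▸ hex)
      have hcase : SwapCase r c r' c' := Or.inr ⟨hclt, hadj⟩
      obtain ⟨T2, hT2⟩ := swap_valid hx hy hex hey hcase
      have hcc : c ≠ c' := by omega
      have hst := stWord_swap hx hy hex hey hcc hT2
      have hw := Wmeas_swap hx hy hex hey hcc hT2
      have hlt : Wmeas α T < Wmeas α T2 := by
        have e1 : c * (i + 1) = c * i + c := by ring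
        have e2 : c' * (i + 1) = c' * i + c' := by ring
        omega
      have hbd := Wmeas_lt T2
      obtain ⟨T', h1, h2⟩ := ih T2 (by omega)
      exact ⟨T', h1.trans hst, h2⟩

theorem exists_source (T : SRCT α) : ∃ T', stWord α T' = stWord α T ∧ IsSource α T' := by
  have h := Wmeas_lt T
  exact exists_source_aux (α.length * maxPart α * (maxPart α * α.sum) + 2 - Wmeas α T) T
    (by omega)

end Exist

/-! ### Pinning descent/attacking/source data to canonical positions -/

section Pin
variable {α : List ℕ} {T : SRCT α} {u : ℕ}

theorem attacking_pin (h : Attacking α T u) :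
    colOf T (u + 1) = colOf T u ∨
      (colOf T (u + 1) = colOf T u + 1 ∧ rowOf T u < rowOf T (u + 1)) := by
  obtain ⟨a, b, a', b', h1, h2, h3, h4, h5⟩ := h
  obtain ⟨ha, hb⟩ := posOf_unique T h1 h3
  obtain ⟨ha', hb'⟩ := posOf_unique T h2 h4
  subst ha hb ha' hb'
  exact h5

theorem descent_make (hu1 : 1 ≤ u) (hu2 : u + 1 ≤ α.sum)
    (h : colOf T u ≤ colOf T (u + 1)) : Descent α T u :=
  ⟨_, _, _, _, posOf_cell T hu1 (by omega), posOf_cell T (by omega) hu2,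
    entry_posOf T hu1 (by omega), entry_posOf T (by omega) hu2, h⟩

theorem not_descent_pin (hu1 : 1 ≤ u) (hu2 : u + 1 ≤ α.sum) (h : ¬ Descent α T u) :
    colOf T (u + 1) < colOf T u := by
  by_contra hcon
  exact h (descent_make hu1 hu2 (by omega))

theorem source_pin (hsrc : IsSource α T) (hu1 : 1 ≤ u) (hu2 : u + 1 ≤ α.sum)
    (hnd : ¬ Descent α T u) :
    rowOf T (u + 1) = rowOf T u ∧ colOf T (u + 1) + 1 = colOf T u := by
  obtain ⟨r, c, hc1, he1, he2⟩ := hsrc u hu1 (by omega) hnd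
  obtain ⟨ha, hb⟩ := posOf_unique T hc1 he2
  obtain ⟨ha', hb'⟩ := posOf_unique T (cell_mono hc1 (Nat.le_succ c)) he1
  omega

end Pin

/-! ### The key monotonicity lemmas -/

section Mono
variable {α : List ℕ} {T T' : SRCT α}

theorem sink_mono_val (h : stWord α T = stWord α T') (hsink : IsSink α T') :
    ∀ (gap b a : ℕ), 1 ≤ b → a ≤ α.sum → b < a → a ≤ b + gap →
      colOf T' b < colOf T' a →
      T.entry (rowOf T' b) (colOf T' b) < T.entry (rowOf T' a) (colOf T' a) := by
  intro gap
  induction gap with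
  | zero => intro b a _ _ _ _ _; omega
  | succ gap ih =>
    intro b a hb1 han hba hle hcol
    have hyc : IsCell α (rowOf T' b) (colOf T' b) := posOf_cell T' hb1 (by omega)
    have hxc : IsCell α (rowOf T' a) (colOf T' a) := posOf_cell T' (by omega) han
    have heb : T'.entry (rowOf T' b) (colOf T' b) = b := entry_posOf T' hb1 (by omega)
    have hea : T'.entry (rowOf T' a) (colOf T' a) = a := entry_posOf T' (by omega) han
    classical
    set yc := colOf T' b with hycdef
    -- the last value of [b, a-1] in columns ≤ yc
    set s := (Finset.Icc b (a - 1)).filter (fun v => colOf T' v ≤ yc) with hs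
    have hbs : b ∈ s := by
      rw [hs, Finset.mem_filter, Finset.mem_Icc]
      exact ⟨⟨le_refl b, by omega⟩, by omega⟩
    have hsne : s.Nonempty := ⟨b, hbs⟩
    set u := s.max' hsne with hu
    have hus : u ∈ s := s.max'_mem hsne
    rw [hs, Finset.mem_filter, Finset.mem_Icc] at hus
    obtain ⟨⟨hu1, hu2⟩, hu3⟩ := hus
    have hu1' : 1 ≤ u := by omega
    have hun : u + 1 ≤ α.sum := by omega
    have hafter : ∀ v, u < v → v ≤ a → yc < colOf T' v := by
      intro v hv1 hv2
      rcases Nat.lt_or_ge v a with hva | hva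
      · by_contra hcon
        have hv : v ∈ s := by
          rw [hs, Finset.mem_filter, Finset.mem_Icc]
          exact ⟨⟨by omega, by omega⟩, by omega⟩
        have := s.le_max' v hv
        omega
      · have : v = a := by omega
        subst this
        omega
    have hcolu1 : yc < colOf T' (u + 1) := hafter (u + 1) (by omega) (by omega)
    -- sink: the ascent step u → u+1 is attacking
    have hdes : Descent α T' u := descent_make hu1' hun (by omega)
    have hatt := attacking_pin (hsink u hdes)
    rcases hatt with h1 | ⟨h1, h2⟩
    · omega
    have hcu : colOf T' u = yc := by omega
    -- cells of u and u+1 in T'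
    have hcellu : IsCell α (rowOf T' u) yc := hcu ▸ posOf_cell T' hu1' (by omega)
    have hcellu1 : IsCell α (rowOf T' (u + 1)) (yc + 1) := by
      have := posOf_cell T' (by omega : 1 ≤ u + 1) hun
      rwa [h1, hcu] at this
    have heu : T'.entry (rowOf T' u) yc = u := by
      have := entry_posOf T' hu1' (by omega)
      rwa [hcu] at this
    have heu1 : T'.entry (rowOf T' (u + 1)) (yc + 1) = u + 1 := by
      have := entry_posOf T' (by omega : 1 ≤ u + 1) hun
      rwa [h1, hcu] at this
    -- Step 1 : T.entry (cell of b) ≤ T.entry (cell of u)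
    have step1 : T.entry (rowOf T' b) yc ≤ T.entry (rowOf T' u) yc := by
      rcases Nat.eq_or_lt_of_le hu1 with hbu | hbu
      · rw [← hbu]
      · have hord := (col_order h hyc hcellu).mpr (by rw [heu, heb]; omega)
        omega
    -- Step 2 : T.entry (cell of u) < T.entry (cell of u+1)
    have hrowsne : rowOf T' u ≠ rowOf T' (u + 1) := by omega
    have step2 : T.entry (rowOf T' u) yc < T.entry (rowOf T' (u + 1)) (yc + 1) := by
      by_contra hcon
      have hne : T.entry (rowOf T' (u + 1)) (yc + 1) ≠ T.entry (rowOf T' u) yc := by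
        intro he
        exact hrowsne ((T.inj _ _ _ _ hcellu1 hcellu he).1).symm
      obtain ⟨hC, hCgt⟩ := T.triple (rowOf T' u) (rowOf T' (u + 1)) yc h2 hcellu hcellu1
        (by omega)
      have hrd := T'.row_dec (rowOf T' u) yc hC
      rw [heu] at hrd
      have := (col_order h hC hcellu1).mpr (by rw [heu1]; omega)
      omega
    -- Step 3 : chain to a
    rcases Nat.eq_or_lt_of_le (show u + 1 ≤ a by omega) with hua | hua
    · rw [← hua, h1, hcu]
      omega
    · rcases Nat.eq_or_lt_of_le (show yc + 1 ≤ colOf T' a by omega) with hyx | hyx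
      · have hxcell' : IsCell α (rowOf T' a) (yc + 1) := by rw [hyx]; exact hxc
        have hea' : T'.entry (rowOf T' a) (yc + 1) = a := by rw [hyx]; exact hea
        have hord := (col_order h hcellu1 hxcell').mpr (by rw [heu1, hea']; omega)
        rw [← hyx]
        omega
      · have hrec := ih (u + 1) a (by omega) han (by omega) (by omega)
          (by rw [h1, hcu]; omega)
        have : colOf T' (u + 1) = yc + 1 := by omega
        rw [this] at hrec
        omega

theorem sink_mono (h : stWord α T = stWord α T') (hsink : IsSink α T')
    {xr xc yr yc : ℕ} (hx : IsCell α xr xc) (hy : IsCell α yr yc)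
    (hcc : yc < xc) (hlt : T'.entry yr yc < T'.entry xr xc) :
    T.entry yr yc < T.entry xr xc := by
  obtain ⟨hyr, hyc⟩ := posOf_unique T' hy rfl
  obtain ⟨hxr, hxc⟩ := posOf_unique T' hx rfl
  have hb1 : 1 ≤ T'.entry yr yc := T'.one_le yr yc hy
  have han : T'.entry xr xc ≤ α.sum := T'.le_sum xr xc hx
  have := sink_mono_val h hsink (T'.entry xr xc) (T'.entry yr yc) (T'.entry xr xc)
    hb1 han hlt (by omega) (by omega)
  rwa [← hyr, ← hyc, ← hxr, ← hxc] at this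

theorem descent_pin' {u : ℕ} (hd : Descent α T' u) : colOf T' u ≤ colOf T' (u + 1) := by
  obtain ⟨p, q, p', q', h1', h2', h3', h4', h5'⟩ := hd
  obtain ⟨e1, e2⟩ := posOf_unique T' h1' h3'
  obtain ⟨e3, e4⟩ := posOf_unique T' h2' h4'
  omega

theorem source_mono_val (h : stWord α T = stWord α T') (hsrc : IsSource α T') :
    ∀ (gap a b : ℕ), 1 ≤ a → b ≤ α.sum → a < b → b ≤ a + gap →
      colOf T' b < colOf T' a →
      T.entry (rowOf T' a) (colOf T' a) < T.entry (rowOf T' b) (colOf T' b) := by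
  intro gap
  induction gap with
  | zero => intro a b _ _ _ _ _; omega
  | succ gap ih =>
    intro a b ha1 hbn hab hle hcol
    have hacell : IsCell α (rowOf T' a) (colOf T' a) := posOf_cell T' ha1 (by omega)
    have hbcell : IsCell α (rowOf T' b) (colOf T' b) := posOf_cell T' (by omega) hbn
    have hea : T'.entry (rowOf T' a) (colOf T' a) = a := entry_posOf T' ha1 (by omega)
    have heb : T'.entry (rowOf T' b) (colOf T' b) = b := entry_posOf T' (by omega) hbn
    classical
    set xc := colOf T' a with hxcdef
    set s := (Finset.Icc a (b - 1)).filter (fun v => xc ≤ colOf T' v) with hs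
    have has : a ∈ s := by
      rw [hs, Finset.mem_filter, Finset.mem_Icc]
      exact ⟨⟨le_refl a, by omega⟩, by omega⟩
    have hsne : s.Nonempty := ⟨a, has⟩
    set u := s.max' hsne with hu
    have hus : u ∈ s := s.max'_mem hsne
    rw [hs, Finset.mem_filter, Finset.mem_Icc] at hus
    obtain ⟨⟨hu1, hu2⟩, hu3⟩ := hus
    have hu1' : 1 ≤ u := by omega
    have hun : u + 1 ≤ α.sum := by omega
    have hafter : ∀ v, u < v → v ≤ b → colOf T' v < xc := by
      intro v hv1 hv2
      rcases Nat.lt_or_ge v b with hvb | hvb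
      · by_contra hcon
        have hv : v ∈ s := by
          rw [hs, Finset.mem_filter, Finset.mem_Icc]
          exact ⟨⟨by omega, by omega⟩, by omega⟩
        have := s.le_max' v hv
        omega
      · have : v = b := by omega
        subst this
        omega
    have hcolu1 : colOf T' (u + 1) < xc := hafter (u + 1) (by omega) (by omega)
    have hnd : ¬ Descent α T' u := by
      intro hd
      have := descent_pin' hd
      omega
    obtain ⟨hrowe, hcole⟩ := source_pin hsrc hu1' hun hnd
    have hcu : colOf T' u = xc := by omega
    have hcu1 : colOf T' (u + 1) + 1 = xc := by omega
    -- step 1 : T.entry (pos a) ≤ T.entry (pos u), same column xc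
    have hcellu : IsCell α (rowOf T' u) xc := hcu ▸ posOf_cell T' hu1' (by omega)
    have heu : T'.entry (rowOf T' u) xc = u := by
      have := entry_posOf T' hu1' (by omega)
      rwa [hcu] at this
    have step1 : T.entry (rowOf T' a) xc ≤ T.entry (rowOf T' u) xc := by
      rcases Nat.eq_or_lt_of_le hu1 with hau | hau
      · rw [← hau]
      · have hord := (col_order h hacell hcellu).mpr (by rw [heu, hea]; omega)
        omega
    -- step 2 : row decrease in T
    have hcellu1 : IsCell α (rowOf T' u) (colOf T' (u + 1)) := by
      rw [← hrowe]
      exact posOf_cell T' (by omega) hun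
    have step2 : T.entry (rowOf T' u) xc < T.entry (rowOf T' u) (colOf T' (u + 1)) := by
      have := T.row_dec (rowOf T' u) (colOf T' (u + 1)) (by rw [hcu1]; exact hcellu)
      rwa [hcu1] at this
    -- step 3
    rcases Nat.eq_or_lt_of_le (show u + 1 ≤ b by omega) with hub | hub
    · rw [← hub, hrowe]
      omega
    · rcases Nat.eq_or_lt_of_le (show colOf T' b ≤ colOf T' (u + 1) by
        have := hafter b (by omega) (le_refl b); omega) with hcb | hcb
      · -- same column
        have hbcell' : IsCell α (rowOf T' b) (colOf T' (u + 1)) := by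
          rw [← hcb]; exact hbcell
        have heb' : T'.entry (rowOf T' b) (colOf T' (u + 1)) = b := by
          rw [← hcb]; exact heb
        have hcellu1' : IsCell α (rowOf T' (u + 1)) (colOf T' (u + 1)) :=
          posOf_cell T' (by omega) hun
        have heu1' : T'.entry (rowOf T' (u + 1)) (colOf T' (u + 1)) = u + 1 :=
          entry_posOf T' (by omega) hun
        have hord := (col_order h hcellu1' hbcell').mpr (by rw [heu1', heb']; omega)
        rw [hrowe, ← hcb] at hord
        rw [← hcb] at step2
        omega
      · have hrec := ih (u + 1) b (by omega) hbn (by omega) (by omega) (by omega)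
        rw [hrowe] at hrec
        omega

theorem source_mono (h : stWord α T = stWord α T') (hsrc : IsSource α T')
    {xr xc yr yc : ℕ} (hx : IsCell α xr xc) (hy : IsCell α yr yc)
    (hcc : yc < xc) (hlt : T'.entry xr xc < T'.entry yr yc) :
    T.entry xr xc < T.entry yr yc := by
  obtain ⟨hyr, hyc⟩ := posOf_unique T' hy rfl
  obtain ⟨hxr, hxc⟩ := posOf_unique T' hx rfl
  have ha1 : 1 ≤ T'.entry xr xc := T'.one_le xr xc hx
  have hbn : T'.entry yr yc ≤ α.sum := T'.le_sum yr yc hy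
  have := source_mono_val h hsrc (T'.entry yr yc) (T'.entry xr xc) (T'.entry yr yc)
    ha1 hbn hlt (by omega) (by omega)
  rwa [← hyr, ← hyc, ← hxr, ← hxc] at this

end Mono

/-! ### Uniqueness -/

section Unique
variable {α : List ℕ} {T T' : SRCT α}

/-- if two SRCT differ, the induced value permutation has a descent -/
theorem rho_exists (hne : T ≠ T') :
    ∃ i, 1 ≤ i ∧ i + 1 ≤ α.sum ∧
      T'.entry (rowOf T (i + 1)) (colOf T (i + 1)) <
        T'.entry (rowOf T i) (colOf T i) := by
  by_contra hcon
  push_neg at hcon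
  -- ρ is weakly monotone on [1, n], hence strictly, hence the identity
  have hinj : ∀ i, 1 ≤ i → i + 1 ≤ α.sum →
      T'.entry (rowOf T i) (colOf T i) < T'.entry (rowOf T (i + 1)) (colOf T (i + 1)) := by
    intro i h1 h2
    have hle := hcon i h1 h2
    have hces : IsCell α (rowOf T i) (colOf T i) := posOf_cell T h1 (by omega)
    have hces' : IsCell α (rowOf T (i + 1)) (colOf T (i + 1)) := posOf_cell T (by omega) h2
    rcases Nat.eq_or_lt_of_le hle with he | hlt
    · exfalso
      have := T'.inj _ _ _ _ hces hces' he
      have e1 : T.entry (rowOf T i) (colOf T i) = i := entry_posOf T h1 (by omega)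
      have e2 : T.entry (rowOf T (i + 1)) (colOf T (i + 1)) = i + 1 :=
        entry_posOf T (by omega) h2
      rw [this.1, this.2, e2] at e1
      omega
    · exact hlt
  have hup : ∀ i, 1 ≤ i → i ≤ α.sum → i ≤ T'.entry (rowOf T i) (colOf T i) := by
    intro i
    induction i with
    | zero => omega
    | succ k ih =>
      intro _ hk
      rcases Nat.eq_or_lt_of_le (show 1 ≤ k + 1 by omega) with h1 | h1
      · have := T'.one_le _ _ (posOf_cell T (by omega : (1:ℕ) ≤ k + 1) hk)
        omega
      · have hk1 : 1 ≤ k := by omega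
        have := ih hk1 (by omega)
        have := hinj k hk1 (by omega)
        omega
  have hdown : ∀ d i, 1 ≤ i → i + d = α.sum → T'.entry (rowOf T i) (colOf T i) ≤ i := by
    intro d
    induction d with
    | zero =>
      intro i h1 h2
      have := T'.le_sum _ _ (posOf_cell T h1 (by omega))
      omega
    | succ d ih =>
      intro i h1 h2
      have := ih (i + 1) (by omega) (by omega)
      have := hinj i h1 (by omega)
      omega
  apply hne
  apply SRCT.ext'
  funext p q
  by_cases hcell : IsCell α p q
  · have h1 : 1 ≤ T.entry p q := T.one_le p q hcell
    have h2 : T.entry p q ≤ α.sum := T.le_sum p q hcell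
    obtain ⟨hp, hq⟩ := posOf_unique T hcell rfl
    have e1 := hup (T.entry p q) h1 h2
    have e2 := hdown (α.sum - T.entry p q) (T.entry p q) h1 (by omega)
    rw [← hp, ← hq] at e1 e2
    omega
  · rw [T.zero_off p q hcell, T'.zero_off p q hcell]

theorem sink_unique (h : stWord α T = stWord α T') (h1 : IsSink α T) (h2 : IsSink α T') :
    T = T' := by
  by_contra hne
  obtain ⟨i, hi1, hin, hgt⟩ := rho_exists hne
  have hx : IsCell α (rowOf T i) (colOf T i) := posOf_cell T hi1 (by omega)
  have hy : IsCell α (rowOf T (i + 1)) (colOf T (i + 1)) := posOf_cell T (by omega) hin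
  have hex : T.entry (rowOf T i) (colOf T i) = i := entry_posOf T hi1 (by omega)
  have hey : T.entry (rowOf T (i + 1)) (colOf T (i + 1)) = i + 1 :=
    entry_posOf T (by omega) hin
  rcases lt_trichotomy (colOf T i) (colOf T (i + 1)) with hc | hc | hc
  · -- descent in T, so attacking in T (T is a sink)
    have hatt := attacking_pin (h1 i (descent_make hi1 hin (le_of_lt hc)))
    rcases hatt with he | ⟨he, hrow⟩
    · omega
    · -- i+1 strictly southeast-adjacent: triple rule argument in T'
      have hy' : IsCell α (rowOf T (i + 1)) (colOf T i + 1) := by rw [← he]; exact hy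
      have hgt' : T'.entry (rowOf T (i + 1)) (colOf T i + 1) <
          T'.entry (rowOf T i) (colOf T i) := by rw [← he]; exact hgt
      obtain ⟨hC, hCgt⟩ := T'.triple (rowOf T i) (rowOf T (i + 1)) (colOf T i) hrow hx hy' hgt'
      -- in T, the cell right of i has entry < i, but column order forces T' contradiction
      have hTC : T.entry (rowOf T i) (colOf T i + 1) < i := by
        have := T.row_dec (rowOf T i) (colOf T i) hC
        omega
      have hTy : T.entry (rowOf T (i + 1)) (colOf T i + 1) = i + 1 := by
        rw [← he]; exact hey
      have := (col_order h hC hy').mp (by omega)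
      omega
  · -- same column
    have hy2 : IsCell α (rowOf T (i + 1)) (colOf T i) := by rw [hc]; exact hy
    have hey2 : T.entry (rowOf T (i + 1)) (colOf T i) = i + 1 := by rw [hc]; exact hey
    have hlt := (col_order h hx hy2).mp (by omega)
    rw [hc] at hlt hgt
    omega
  · -- non-descent in T: use sink monotonicity for T'
    have := sink_mono h h2 hx hy hc hgt
    omega

theorem source_unique (h : stWord α T = stWord α T') (h1 : IsSource α T)
    (h2 : IsSource α T') : T = T' := by
  by_contra hne
  obtain ⟨i, hi1, hin, hgt⟩ := rho_exists hne
  have hx : IsCell α (rowOf T i) (colOf T i) := posOf_cell T hi1 (by omega)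
  have hy : IsCell α (rowOf T (i + 1)) (colOf T (i + 1)) := posOf_cell T (by omega) hin
  have hex : T.entry (rowOf T i) (colOf T i) = i := entry_posOf T hi1 (by omega)
  have hey : T.entry (rowOf T (i + 1)) (colOf T (i + 1)) = i + 1 :=
    entry_posOf T (by omega) hin
  rcases lt_trichotomy (colOf T i) (colOf T (i + 1)) with hc | hc | hc
  · -- descent in T: source monotonicity for T'
    have := source_mono h h2 hy hx hc hgt
    omega
  · -- same column
    have hy2 : IsCell α (rowOf T (i + 1)) (colOf T i) := by rw [hc]; exact hy
    have hey2 : T.entry (rowOf T (i + 1)) (colOf T i) = i + 1 := by rw [hc]; exact hey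
    have hlt := (col_order h hx hy2).mp (by omega)
    rw [hc] at hlt hgt
    omega
  · -- non-descent in T: T is a source, so i+1 is immediately left of i; row order in T'
    have hnd : ¬ Descent α T i := by
      intro hd
      have := descent_pin' hd
      omega
    obtain ⟨hrowe, hcole⟩ := source_pin h1 hi1 hin hnd
    have hcell : IsCell α (rowOf T (i + 1)) (colOf T (i + 1) + 1) := by
      rw [hcole, hrowe]; exact hx
    have hrd := T'.row_dec (rowOf T (i + 1)) (colOf T (i + 1)) hcell
    rw [hcole, hrowe] at hrd
    rw [hrowe] at hgt
    omega

end Unique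

/-- Every `∼_α`-equivalence class contains exactly one source tableau and exactly one sink
tableau; hence sources, sinks and equivalence classes are equinumerous. -/
theorem unique_source_and_sink (n : ℕ) (α : List ℕ) (hpos : ∀ a ∈ α, 0 < a)
    (hsum : α.sum = n) :
    (∀ T : SRCT α, ∃! Ts : SRCT α, Ts ∈ stClass α T ∧ IsSource α Ts) ∧
    (∀ T : SRCT α, ∃! Tk : SRCT α, Tk ∈ stClass α T ∧ IsSink α Tk) ∧
    Set.ncard {T : SRCT α | IsSource α T} = Set.ncard (Set.range (stWord α)) ∧
    Set.ncard {T : SRCT α | IsSink α T} = Set.ncard (Set.range (stWord α)) := by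
  refine ⟨?_, ?_, ?_, ?_⟩
  · intro T
    obtain ⟨Ts, hst, hsrc⟩ := exists_source T
    refine ⟨Ts, ⟨hst, hsrc⟩, ?_⟩
    rintro T2 ⟨hst2, hsrc2⟩
    exact source_unique ((hst2 : stWord α T2 = stWord α T).trans hst.symm) hsrc2 hsrc
  · intro T
    obtain ⟨Tk, hst, hsnk⟩ := exists_sink T
    refine ⟨Tk, ⟨hst, hsnk⟩, ?_⟩
    rintro T2 ⟨hst2, hsnk2⟩
    exact sink_unique ((hst2 : stWord α T2 = stWord α T).trans hst.symm) hsnk2 hsnk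
  · have hset : Set.range (stWord α) = stWord α '' {T : SRCT α | IsSource α T} := by
      ext w
      constructor
      · rintro ⟨T, rfl⟩
        obtain ⟨Ts, hst, hsrc⟩ := exists_source T
        exact ⟨Ts, hsrc, hst⟩
      · rintro ⟨T, -, rfl⟩
        exact ⟨T, rfl⟩
    rw [hset, Set.ncard_image_of_injOn]
    intro T1 h1 T2 h2 he
    exact source_unique he h1 h2
  · have hset : Set.range (stWord α) = stWord α '' {T : SRCT α | IsSink α T} := by
      ext w
      constructor
      · rintro ⟨T, rfl⟩
        obtain ⟨Tk, hst, hsnk⟩ := exists_sink T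
        exact ⟨Tk, hsnk, hst⟩
      · rintro ⟨T, -, rfl⟩
        exact ⟨T, rfl⟩
    rw [hset, Set.ncard_image_of_injOn]
    intro T1 h1 T2 h2 he
    exact sink_unique he h1 h2
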